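/- Let $M \in \mathbb{R}^{n\times(k+1)}$ be a matrix of rank $k$. Choose $P \subseteq [k+1]$ and $Q \subseteq [n]$ with $|P| = |Q| = k$ maximizing $|\det(M_P^Q)|$ (the determinant of the submatrix with columns in $P$ and rows in $Q$). Then for the unique index $i \in [k+1] \setminus P$, the linear system $M_P x = M_i$ has a unique solution $x \in \mathbb{R}^k$, and this solution satisfies $\|x\|_\infty \leq 1$. -/

import Mathlib

open Matrix

lemma extract_indep {V : Type*} [AddCommGroup V] [Module ℝ V] {ι : Type*} [Fintype ι]
    (v : ι → V) {k : ℕ} (hk : Module.finrank ℝ (Submodule.span ℝ (Set.range v)) = k) :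
    ∃ f : Fin k → ι, Function.Injective f ∧ LinearIndependent ℝ (v ∘ f) := by
  obtain ⟨b, hbt, hspan, hind⟩ := exists_linearIndependent ℝ (Set.range v)
  have hbfin : b.Finite := (Set.finite_range v).subset hbt
  haveI := hbfin.fintype
  have hcard : Fintype.card b = k := by
    rw [← hk, ← hspan, finrank_span_set_eq_card hind, Set.toFinset_card]
  let e : Fin k ≃ b := (Fintype.equivFinOfCardEq hcard).symm
  have hsel : ∀ w : b, v ((hbt w.2).choose) = (w : V) := fun w => (hbt w.2).choose_spec
  refine ⟨fun j => (hbt (e j).2).choose, ?_, ?_⟩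
  · intro a a' h
    have h2 : ((e a : V)) = (e a' : V) := by
      rw [← hsel (e a), ← hsel (e a')]; exact congrArg v h
    exact e.injective (Subtype.ext h2)
  · have : v ∘ (fun j => (hbt (e j).2).choose) = (Subtype.val ∘ e) := by
      funext j; exact hsel (e j)
    rw [this]
    exact hind.comp e e.injective

lemma update_injective {k m : ℕ} (P : Fin k → Fin m) (hP : Function.Injective P)
    (j : Fin k) (i : Fin m) (hi : i ∉ Set.range P) :
    Function.Injective (Function.update P j i) := by
  have hij : ∀ a : Fin k, a ≠ j → Function.update P j i a = P a :=
    fun a ha => Function.update_of_ne ha i P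
  intro a a' h
  by_cases ha : a = j <;> by_cases ha' : a' = j
  · rw [ha, ha']
  · exfalso; apply hi
    have h2 := h
    rw [ha, Function.update_self, hij a' ha'] at h2
    exact ⟨a', h2.symm⟩
  · exfalso; apply hi
    have h2 := h
    rw [ha', Function.update_self, hij a ha] at h2
    exact ⟨a, h2⟩
  · exact hP (by rwa [hij a ha, hij a' ha'] at h)

/-- Cramer's rule bound: columns of a maximum-volume submatrix fit the remaining
column with coefficients of absolute value at most 1, and the solution is unique. -/
theorem stmt0 (n k : ℕ) (hk : 0 < k) (M : Matrix (Fin n) (Fin (k + 1)) ℝ)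
    (hrank : M.rank = k)
    (P : Fin k → Fin (k + 1)) (hP : Function.Injective P)
    (Q : Fin k → Fin n) (hQ : Function.Injective Q)
    (hmax : ∀ (P' : Fin k → Fin (k + 1)) (Q' : Fin k → Fin n),
      Function.Injective P' → Function.Injective Q' →
      |(M.submatrix Q' P').det| ≤ |(M.submatrix Q P).det|)
    (i : Fin (k + 1)) (hi : i ∉ Set.range P) :
    ∃ x : Fin k → ℝ,
      (∀ r : Fin n, ∑ j, M r (P j) * x j = M r i) ∧
      (∀ j, |x j| ≤ 1) ∧
      (∀ y : Fin k → ℝ, (∀ r : Fin n, ∑ j, M r (P j) * y j = M r i) → y = x) := by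
  classical
  set A := M.submatrix Q P with hA
  -- Step 1: det A ≠ 0
  have hspanc : Module.finrank ℝ (Submodule.span ℝ (Set.range Mᵀ)) = k := by
    have := M.rank_eq_finrank_span_cols; rw [hrank] at this; exact this.symm
  obtain ⟨P₀, hP₀, hindc⟩ := extract_indep Mᵀ hspanc
  have hNrank : (M.submatrix id P₀).rank = k := by
    have hT : (M.submatrix id P₀)ᵀ = fun j => (Mᵀ ∘ P₀) j := by
      ext j r; rfl
    have : (M.submatrix id P₀)ᵀ.rank = k := by
      rw [hT]
      have := (hindc : LinearIndependent ℝ (Mᵀ ∘ P₀)).rank_matrix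
      simp at this; exact this
    rwa [rank_transpose] at this
  have hspanr : Module.finrank ℝ (Submodule.span ℝ (Set.range (M.submatrix id P₀))) = k := by
    have := (M.submatrix id P₀).rank_eq_finrank_span_row; rw [hNrank] at this; exact this.symm
  obtain ⟨Q₀, hQ₀, hindr⟩ := extract_indep (M.submatrix id P₀) hspanr
  have hdet0 : (M.submatrix Q₀ P₀).det ≠ 0 := by
    have hunit : IsUnit (M.submatrix Q₀ P₀) := by
      rw [← linearIndependent_rows_iff_isUnit]
      have : (fun r => (M.submatrix Q₀ P₀) r) = (M.submatrix id P₀) ∘ Q₀ := by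
        ext r j; rfl
      exact hindr
    rw [isUnit_iff_isUnit_det, isUnit_iff_ne_zero] at hunit
    exact hunit
  have hdetA : A.det ≠ 0 := by
    intro h
    have := hmax P₀ Q₀ hP₀ hQ₀
    rw [h, abs_zero] at this
    exact hdet0 (abs_eq_zero.mp (le_antisymm this (abs_nonneg _)))
  haveI : Invertible A := A.invertibleOfIsUnitDet (isUnit_iff_ne_zero.mpr hdetA)
  have hinj : Function.Injective (A.mulVec) := A.mulVec_injective_of_invertible
  -- Step 2: columns M_P are independent, hence span the column space
  have hindP : LinearIndependent ℝ (Mᵀ ∘ P) := by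
    rw [Fintype.linearIndependent_iff]
    intro c hc j
    have hAc : A *ᵥ c = 0 := by
      funext r
      have := congrFun hc (Q r)
      simp only [Finset.sum_apply, Pi.smul_apply, Function.comp_apply, smul_eq_mul,
        Pi.zero_apply, transpose_apply] at this
      simp only [mulVec, dotProduct, Pi.zero_apply, hA, submatrix_apply]
      rw [← this]
      exact Finset.sum_congr rfl fun j' _ => mul_comm _ _
    have : c = 0 := hinj (by rw [hAc, Matrix.mulVec_zero])
    exact congrFun this j
  have hle : Submodule.span ℝ (Set.range (Mᵀ ∘ P)) ≤ Submodule.span ℝ (Set.range Mᵀ) :=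
    Submodule.span_mono (Set.range_comp_subset_range _ _)
  have heq : Submodule.span ℝ (Set.range (Mᵀ ∘ P)) = Submodule.span ℝ (Set.range Mᵀ) := by
    apply Submodule.eq_of_le_of_finrank_le hle
    rw [hspanc, finrank_span_eq_card hindP, Fintype.card_fin]
  have hmem : Mᵀ i ∈ Submodule.span ℝ (Set.range (Mᵀ ∘ P)) := by
    rw [heq]; exact Submodule.subset_span ⟨i, rfl⟩
  rw [Submodule.mem_span_range_iff_exists_fun] at hmem
  obtain ⟨c, hc⟩ := hmem
  have hcr : ∀ r : Fin n, ∑ j, M r (P j) * c j = M r i := by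
    intro r
    have := congrFun hc r
    simp only [Finset.sum_apply, Pi.smul_apply, Function.comp_apply, smul_eq_mul,
      transpose_apply] at this
    rw [← this]
    exact Finset.sum_congr rfl fun j' _ => mul_comm _ _
  set b : Fin k → ℝ := fun r => M (Q r) i with hb
  have hAc : A *ᵥ c = b := by
    funext r
    simp only [mulVec, dotProduct, hb, hA, submatrix_apply]
    exact hcr (Q r)
  refine ⟨c, hcr, ?_, ?_⟩
  · -- Cramer bound
    intro j
    have hcramer : A *ᵥ (cramer A b) = A.det • b := Matrix.mulVec_cramer A b
    have hcb : cramer A b = A.det • c := by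
      apply hinj
      rw [hcramer, Matrix.mulVec_smul, hAc]
    have hcj : cramer A b j = A.det * c j := by rw [hcb]; rfl
    have hup : A.updateCol j b = M.submatrix Q (Function.update P j i) := by
      ext r c'
      rcases eq_or_ne c' j with rfl | hc'
      · simp [Matrix.updateCol_apply, hb]
      · simp only [Matrix.updateCol_apply, if_neg hc', hA, submatrix_apply,
          Function.update_apply]
    have hbound : |(A.updateCol j b).det| ≤ |A.det| := by
      rw [hup]
      exact hmax _ Q (update_injective P hP j i hi) hQ
    rw [cramer_apply] at hcj
    have : |A.det| * |c j| ≤ |A.det| * 1 := by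
      rw [mul_one, ← abs_mul, ← hcj]; exact hbound
    exact le_of_mul_le_mul_left this (abs_pos.mpr hdetA)
  · -- uniqueness
    intro y hy
    apply hinj
    rw [hAc]
    funext r
    simp only [mulVec, dotProduct, hb, hA, submatrix_apply]
    exact hy (Q r)
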